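/- Let f : ℝ → [0,∞) be a probability density that vanishes outside a bounded open interval S = (s_0, s_1) and satisfies f(x) ≥ b > 0 for all x ∈ S. Let K : ℝ → [0,∞) be a bounded symmetric kernel supported in (−1,1) with ∫K(u) du = 1. Set a_K = 2∫_0^1 u K(u) du, c_K = 2∫_0^1 (u − a_K)² K(u) du and c = c_K/8. Then for every h with 0 < h < (s_1 − s_0)/2 and every x ∈ S, ( ∫ f(x − hu) K(u) du ) · ( ∫ f(x − hu) u² K(u) du ) − ( ∫ f(x − hu) u K(u) du )² ≥ 2 b² c. -/

import Mathlib

open MeasureTheory Filter Set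

noncomputable section

/-- `a_K = 2 ∫_0^1 u K(u) du`. -/
def aK (K : ℝ → ℝ) : ℝ := 2 * ∫ u in (0 : ℝ)..1, u * K u

/-- `c_K = 2 ∫_0^1 (u - a_K)² K(u) du`. -/
def cK (K : ℝ → ℝ) : ℝ := 2 * ∫ u in (0 : ℝ)..1, (u - aK K) ^ 2 * K u

/-- `c = c_K / 8`. -/
def cConst (K : ℝ → ℝ) : ℝ := cK K / 8

/-- Expansion of the second moment about `t`. -/
lemma expand_aux {ψ : ℝ → ℝ} (hψ : Integrable ψ)
    (hψ1 : Integrable (fun u => u * ψ u)) (hψ2 : Integrable (fun u => u ^ 2 * ψ u)) (t : ℝ) :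
    (∫ u, (u - t) ^ 2 * ψ u)
      = (∫ u, u ^ 2 * ψ u) - 2 * t * (∫ u, u * ψ u) + t ^ 2 * (∫ u, ψ u) := by
  have hfe : (fun u => (u - t) ^ 2 * ψ u)
      = fun u => (u ^ 2 * ψ u - (2 * t) * (u * ψ u)) + t ^ 2 * ψ u := by
    funext u; ring
  have hi1 : Integrable (fun u => u ^ 2 * ψ u - (2 * t) * (u * ψ u)) :=
    hψ2.sub (hψ1.const_mul (2 * t))
  have hi2 : Integrable (fun u => t ^ 2 * ψ u) := hψ.const_mul (t ^ 2)
  rw [hfe, integral_add hi1 hi2, integral_sub hψ2 (hψ1.const_mul (2 * t)),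
    integral_const_mul, integral_const_mul]

/-- Integrability of the recentered second moment. -/
lemma int_aux {ψ : ℝ → ℝ} (hψ : Integrable ψ)
    (hψ1 : Integrable (fun u => u * ψ u)) (hψ2 : Integrable (fun u => u ^ 2 * ψ u)) (t : ℝ) :
    Integrable (fun u => (u - t) ^ 2 * ψ u) := by
  have hfe : (fun u => (u - t) ^ 2 * ψ u)
      = fun u => (u ^ 2 * ψ u - (2 * t) * (u * ψ u)) + t ^ 2 * ψ u := by
    funext u; ring
  rw [hfe]
  exact (hψ2.sub (hψ1.const_mul (2 * t))).add (hψ.const_mul (t ^ 2))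

/-- Core inequality: if `g ≥ b φ ≥ 0` pointwise, then the design determinant of `g`
dominates `b²` times that of `φ`. -/
lemma core_ineq {g φ : ℝ → ℝ} {b : ℝ} (hb : 0 < b)
    (hg0 : ∀ u, 0 ≤ g u) (hφ0 : ∀ u, 0 ≤ φ u) (hgφ : ∀ u, b * φ u ≤ g u)
    (hg : Integrable g) (hg1 : Integrable (fun u => u * g u))
    (hg2 : Integrable (fun u => u ^ 2 * g u))
    (hφ : Integrable φ) (hφ1 : Integrable (fun u => u * φ u))
    (hφ2 : Integrable (fun u => u ^ 2 * φ u))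
    (hp0 : 0 < ∫ u, φ u) :
    b ^ 2 * ((∫ u, φ u) * (∫ u, u ^ 2 * φ u) - (∫ u, u * φ u) ^ 2)
      ≤ (∫ u, g u) * (∫ u, u ^ 2 * g u) - (∫ u, u * g u) ^ 2 := by
  set p0 := ∫ u, φ u with hp0def
  set p1 := ∫ u, u * φ u with hp1def
  set p2 := ∫ u, u ^ 2 * φ u with hp2def
  set m0 := ∫ u, g u with hm0def
  set m1 := ∫ u, u * g u with hm1def
  set m2 := ∫ u, u ^ 2 * g u with hm2def
  have hm0b : b * p0 ≤ m0 := by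
    have h1 : (∫ u, b * φ u) ≤ ∫ u, g u := integral_mono (hφ.const_mul b) hg hgφ
    rwa [integral_const_mul] at h1
  have hm0pos : 0 < m0 := lt_of_lt_of_le (mul_pos hb hp0) hm0b
  set t := m1 / m0 with htdef
  have hm0ne : m0 ≠ 0 := ne_of_gt hm0pos
  have hEφ : 0 ≤ p2 - 2 * t * p1 + t ^ 2 * p0 := by
    have h0 : 0 ≤ ∫ u, (u - t) ^ 2 * φ u :=
      integral_nonneg fun u => mul_nonneg (sq_nonneg _) (hφ0 u)
    rw [expand_aux hφ hφ1 hφ2 t] at h0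
    linarith
  have key : b * (p2 - 2 * t * p1 + t ^ 2 * p0) ≤ m2 - 2 * t * m1 + t ^ 2 * m0 := by
    have hmono : (∫ u, b * ((u - t) ^ 2 * φ u)) ≤ ∫ u, (u - t) ^ 2 * g u := by
      refine integral_mono ((int_aux hφ hφ1 hφ2 t).const_mul b) (int_aux hg hg1 hg2 t)
        fun u => ?_
      calc b * ((u - t) ^ 2 * φ u) = (u - t) ^ 2 * (b * φ u) := by ring
        _ ≤ (u - t) ^ 2 * g u := mul_le_mul_of_nonneg_left (hgφ u) (sq_nonneg _)
    rw [integral_const_mul, expand_aux hφ hφ1 hφ2 t, expand_aux hg hg1 hg2 t] at hmono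
    linarith
  have ht : t * m0 = m1 := by rw [htdef, div_mul_cancel₀ m1 hm0ne]
  have s3 : m0 * (m2 - 2 * t * m1 + t ^ 2 * m0) = m0 * m2 - m1 ^ 2 := by
    have h2 : t ^ 2 * m0 * m0 = m1 ^ 2 := by
      calc t ^ 2 * m0 * m0 = (t * m0) * (t * m0) := by ring
        _ = m1 ^ 2 := by rw [ht]; ring
    have h3 : m0 * (2 * t * m1) = 2 * m1 ^ 2 := by
      calc m0 * (2 * t * m1) = 2 * (t * m0) * m1 := by ring
        _ = 2 * m1 ^ 2 := by rw [ht]; ring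
    nlinarith [h2, h3]
  have s1 : m0 * (b * (p2 - 2 * t * p1 + t ^ 2 * p0))
      ≤ m0 * (m2 - 2 * t * m1 + t ^ 2 * m0) :=
    mul_le_mul_of_nonneg_left key hm0pos.le
  have s2 : (b * p0) * (b * (p2 - 2 * t * p1 + t ^ 2 * p0))
      ≤ m0 * (b * (p2 - 2 * t * p1 + t ^ 2 * p0)) :=
    mul_le_mul_of_nonneg_right hm0b (mul_nonneg hb.le hEφ)
  have s4 : b ^ 2 * (p0 * p2 - p1 ^ 2)
      ≤ (b * p0) * (b * (p2 - 2 * t * p1 + t ^ 2 * p0)) := by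
    nlinarith [mul_nonneg (sq_nonneg b) (sq_nonneg (t * p0 - p1))]
  linarith

/-- the population local linear design determinant is bounded
below by `2 b² c` uniformly over `x ∈ S` for all small bandwidths `h`. -/
theorem stmt4 (f : ℝ → ℝ) (s0 s1 b : ℝ) (hs : s0 < s1) (hb : 0 < b)
    (hf0 : ∀ x, 0 ≤ f x) (hfint : (∫ x, f x) = 1)
    (hsupp : ∀ x, x ∉ Set.Ioo s0 s1 → f x = 0)
    (hfb : ∀ x ∈ Set.Ioo s0 s1, b ≤ f x)
    (K : ℝ → ℝ) (hK0 : ∀ u, 0 ≤ K u) (CKb : ℝ) (hKb : ∀ u, K u ≤ CKb)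
    (hKsym : ∀ u, K (-u) = K u)
    (hKsupp : ∀ u, u ∉ Set.Ioo (-1 : ℝ) 1 → K u = 0)
    (hKint : (∫ u, K u) = 1) :
    ∀ h : ℝ, 0 < h → h < (s1 - s0) / 2 → ∀ x ∈ Set.Ioo s0 s1,
      2 * b ^ 2 * cConst K ≤
        (∫ u, f (x - h * u) * K u) * (∫ u, f (x - h * u) * (u ^ 2 * K u))
          - (∫ u, f (x - h * u) * (u * K u)) ^ 2 := by
  intro h hh hhs x hx
  -- basic integrability
  have hfInt : Integrable f := by
    by_contra hc; rw [integral_undef hc] at hfint; norm_num at hfint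
  have hKInt : Integrable K := by
    by_contra hc; rw [integral_undef hc] at hKint; norm_num at hKint
  have hKm : AEStronglyMeasurable K (volume : Measure ℝ) := hKInt.1
  have hKout : ∀ u : ℝ, 1 ≤ |u| → K u = 0 := by
    intro u hu
    apply hKsupp
    intro hmem
    have : |u| < 1 := abs_lt.mpr ⟨hmem.1, hmem.2⟩
    linarith
  have hCKb0 : 0 ≤ CKb := le_trans (hK0 0) (hKb 0)
  have hKnorm : ∀ u, ‖K u‖ ≤ CKb := fun u => by
    rw [Real.norm_eq_abs, abs_of_nonneg (hK0 u)]; exact hKb u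
  have hbd1 : ∀ u : ℝ, ‖u * K u‖ ≤ CKb := by
    intro u
    rcases le_or_gt 1 |u| with hu | hu
    · simp [hKout u hu, hCKb0]
    · rw [norm_mul]
      calc ‖u‖ * ‖K u‖ ≤ 1 * ‖K u‖ := by
            apply mul_le_mul_of_nonneg_right _ (norm_nonneg _)
            rw [Real.norm_eq_abs]; exact hu.le
        _ = ‖K u‖ := one_mul _
        _ ≤ CKb := hKnorm u
  have hbd2 : ∀ u : ℝ, ‖u ^ 2 * K u‖ ≤ CKb := by
    intro u
    rcases le_or_gt 1 |u| with hu | hu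
    · simp [hKout u hu, hCKb0]
    · rw [norm_mul]
      calc ‖u ^ 2‖ * ‖K u‖ ≤ 1 * ‖K u‖ := by
            apply mul_le_mul_of_nonneg_right _ (norm_nonneg _)
            rw [Real.norm_eq_abs, abs_pow]
            nlinarith [abs_nonneg u]
        _ = ‖K u‖ := one_mul _
        _ ≤ CKb := hKnorm u
  -- integrability of u^j * K
  have hK1 : Integrable (fun u => u * K u) := by
    refine hKInt.mono (measurable_id.aestronglyMeasurable.mul hKm)
      (Eventually.of_forall fun u => ?_)
    rcases le_or_gt 1 |u| with hu | hu
    · simp [hKout u hu]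
    · rw [norm_mul]
      calc ‖u‖ * ‖K u‖ ≤ 1 * ‖K u‖ := by
            apply mul_le_mul_of_nonneg_right _ (norm_nonneg _)
            rw [Real.norm_eq_abs]; exact hu.le
        _ = ‖K u‖ := one_mul _
  have hK2 : Integrable (fun u => u ^ 2 * K u) := by
    refine hKInt.mono ((measurable_id.pow_const 2).aestronglyMeasurable.mul hKm)
      (Eventually.of_forall fun u => ?_)
    rcases le_or_gt 1 |u| with hu | hu
    · simp [hKout u hu]
    · rw [norm_mul]
      calc ‖u ^ 2‖ * ‖K u‖ ≤ 1 * ‖K u‖ := by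
            apply mul_le_mul_of_nonneg_right _ (norm_nonneg _)
            rw [Real.norm_eq_abs, abs_pow]
            nlinarith [abs_nonneg u]
        _ = ‖K u‖ := one_mul _
  -- integrability of the translated density
  have hF : Integrable (fun u => f (x - h * u)) := by
    have h1 : Integrable (fun t => f (x + t)) := hfInt.comp_add_left x
    have h2 : Integrable (fun t => f (x + -t)) := h1.comp_neg
    have h3 : Integrable (fun t => f (x - t)) := by simpa [sub_eq_add_neg] using h2
    exact h3.comp_mul_left' hh.ne'
  have hFm : AEStronglyMeasurable (fun u => f (x - h * u)) (volume : Measure ℝ) := hF.1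
  -- the three g-integrability facts
  set g : ℝ → ℝ := fun u => f (x - h * u) * K u with hgdef
  have hg0 : ∀ u, 0 ≤ g u := fun u => mul_nonneg (hf0 _) (hK0 u)
  have hG0 : Integrable g := by
    have h1 := hF.bdd_mul (c := CKb) hKm (Eventually.of_forall hKnorm)
    exact h1.congr (Eventually.of_forall fun u => by rw [hgdef]; ring)
  have hG1 : Integrable (fun u => u * g u) := by
    have h1 := hF.bdd_mul (measurable_id.aestronglyMeasurable.mul hKm)
      (c := CKb) (Eventually.of_forall fun u => by simpa using hbd1 u)
    exact h1.congr (Eventually.of_forall fun u => by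
      simp only [Pi.mul_apply, id_eq, hgdef]; ring)
  have hG2 : Integrable (fun u => u ^ 2 * g u) := by
    have h1 := hF.bdd_mul ((measurable_id.pow_const 2).aestronglyMeasurable.mul hKm)
      (c := CKb) (Eventually.of_forall fun u => by simpa using hbd2 u)
    exact h1.congr (Eventually.of_forall fun u => by
      simp only [Pi.mul_apply, Pi.pow_apply, id_eq, hgdef]; ring)
  -- statement integrals in terms of g
  have e1 : (∫ u, f (x - h * u) * (u * K u)) = ∫ u, u * g u := by
    have h1 : (fun u => f (x - h * u) * (u * K u)) = fun u => u * g u := by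
      funext u; rw [hgdef]; ring
    rw [h1]
  have e2 : (∫ u, f (x - h * u) * (u ^ 2 * K u)) = ∫ u, u ^ 2 * g u := by
    have h1 : (fun u => f (x - h * u) * (u ^ 2 * K u)) = fun u => u ^ 2 * g u := by
      funext u; rw [hgdef]; ring
    rw [h1]
  -- the three basic interval-integral quantities
  set A := ∫ u in (0 : ℝ)..1, K u with hAdef
  set B := ∫ u in (0 : ℝ)..1, u * K u with hBdef
  set C := ∫ u in (0 : ℝ)..1, u ^ 2 * K u with hCdef
  -- A = 1/2 by symmetry
  have hIoiIic : (∫ u in Ioi (0 : ℝ), K u) = ∫ u in Iic (0 : ℝ), K u := by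
    have h1 := integral_comp_neg_Iic (0 : ℝ) K
    simp only [hKsym, neg_zero] at h1
    exact h1.symm
  have htot : (∫ u in Iic (0 : ℝ), K u) + (∫ u in Ioi (0 : ℝ), K u) = 1 := by
    rw [intervalIntegral.integral_Iic_add_Ioi hKInt.integrableOn hKInt.integrableOn, hKint]
  have hIoi1 : (∫ u in Ioi (1 : ℝ), K u) = 0 := by
    apply setIntegral_eq_zero_of_forall_eq_zero
    intro u hu
    exact hKout u (by rw [abs_of_pos (lt_trans one_pos hu)]; exact (le_of_lt hu))
  have hsplit : (∫ u in Ioc (0 : ℝ) 1, K u) + (∫ u in Ioi (1 : ℝ), K u)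
      = ∫ u in Ioi (0 : ℝ), K u := by
    rw [← setIntegral_union (Ioc_disjoint_Ioi le_rfl) measurableSet_Ioi
      hKInt.integrableOn hKInt.integrableOn, Ioc_union_Ioi_eq_Ioi (by norm_num : (0 : ℝ) ≤ 1)]
  have hAval : A = 1 / 2 := by
    rw [hAdef, intervalIntegral.integral_of_le (by norm_num : (0 : ℝ) ≤ 1)]
    linarith
  -- interval integrability
  have iiK : IntervalIntegrable K volume 0 1 := hKInt.intervalIntegrable
  have iiK1 : IntervalIntegrable (fun u => u * K u) volume 0 1 := hK1.intervalIntegrable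
  have iiK2 : IntervalIntegrable (fun u => u ^ 2 * K u) volume 0 1 := hK2.intervalIntegrable
  have haK : aK K = 2 * B := by rw [aK, hBdef]
  have hcK : cK K = 2 * C - 4 * (aK K) * B + 2 * (aK K) ^ 2 * A := by
    rw [cK]
    have hfe : (fun u => (u - aK K) ^ 2 * K u)
        = fun u => (u ^ 2 * K u - (2 * aK K) * (u * K u)) + (aK K) ^ 2 * K u := by
      funext u; ring
    rw [hfe, intervalIntegral.integral_add (iiK2.sub (iiK1.const_mul (2 * aK K)))
      (iiK.const_mul ((aK K) ^ 2)), intervalIntegral.integral_sub iiK2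
      (iiK1.const_mul (2 * aK K)), intervalIntegral.integral_const_mul,
      intervalIntegral.integral_const_mul]
    ring
  have hkey : 2 * b ^ 2 * cConst K = b ^ 2 * (A * C - B ^ 2) := by
    rw [cConst, hcK, haK, hAval]; ring
  -- main inequality via the half-interval argument
  have hmain : b ^ 2 * (A * C - B ^ 2)
      ≤ (∫ u, g u) * (∫ u, u ^ 2 * g u) - (∫ u, u * g u) ^ 2 := by
    rcases le_or_gt x ((s0 + s1) / 2) with hxm | hxm
    · -- x in the left half: use J = Ioc (-1) 0
      set φ : ℝ → ℝ := Set.indicator (Ioc (-1 : ℝ) 0) K with hphidef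
      have hφ0 : ∀ u, 0 ≤ φ u := fun u => Set.indicator_nonneg (fun v _ => hK0 v) u
      have hgφ : ∀ u, b * φ u ≤ g u := by
        intro u
        by_cases hu : u ∈ Ioc (-1 : ℝ) 0
        · rw [hphidef, Set.indicator_of_mem hu]
          have hmem : x - h * u ∈ Ioo s0 s1 := by
            constructor
            · nlinarith [hx.1, mul_nonneg hh.le (neg_nonneg.mpr hu.2)]
            · nlinarith [mul_lt_mul_of_pos_left hu.1 hh]
          exact mul_le_mul_of_nonneg_right (hfb _ hmem) (hK0 u)
        · rw [hphidef, Set.indicator_of_notMem hu, mul_zero]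
          exact hg0 u
      have hφInt : Integrable φ := hKInt.indicator measurableSet_Ioc
      have hind1 : (fun u => u * φ u)
          = Set.indicator (Ioc (-1 : ℝ) 0) (fun u => u * K u) := by
        funext u; rw [hphidef]
        by_cases hu : u ∈ Ioc (-1 : ℝ) 0 <;>
          simp [Set.indicator_of_mem, Set.indicator_of_notMem, hu]
      have hind2 : (fun u => u ^ 2 * φ u)
          = Set.indicator (Ioc (-1 : ℝ) 0) (fun u => u ^ 2 * K u) := by
        funext u; rw [hphidef]
        by_cases hu : u ∈ Ioc (-1 : ℝ) 0 <;>
          simp [Set.indicator_of_mem, Set.indicator_of_notMem, hu]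
      have hφ1 : Integrable (fun u => u * φ u) := by
        rw [hind1]; exact hK1.indicator measurableSet_Ioc
      have hφ2 : Integrable (fun u => u ^ 2 * φ u) := by
        rw [hind2]; exact hK2.indicator measurableSet_Ioc
      have hneg0 : ((-1 : ℝ)) ≤ 0 := by norm_num
      have hcn : ∀ F : ℝ → ℝ, (∫ u in (0 : ℝ)..1, F (-u)) = ∫ u in (-1 : ℝ)..0, F u := by
        intro F
        have h1 := intervalIntegral.integral_comp_neg (a := (0 : ℝ)) (b := 1) (f := F)
        simpa using h1
      have hm0 : (∫ u, φ u) = A := by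
        rw [hphidef, integral_indicator measurableSet_Ioc,
          ← intervalIntegral.integral_of_le hneg0, ← hcn K]
        simp only [hKsym, hAdef]
      have hm1 : (∫ u, u * φ u) = -B := by
        rw [hind1, integral_indicator measurableSet_Ioc,
          ← intervalIntegral.integral_of_le hneg0, ← hcn (fun u => u * K u)]
        have h2 : (∫ u in (0 : ℝ)..1, -u * K (-u)) = ∫ u in (0 : ℝ)..1, -(u * K u) := by
          apply intervalIntegral.integral_congr
          intro u _
          show -u * K (-u) = -(u * K u)
          rw [hKsym]; ring
        simpa [intervalIntegral.integral_neg] using h2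
      have hm2 : (∫ u, u ^ 2 * φ u) = C := by
        rw [hind2, integral_indicator measurableSet_Ioc,
          ← intervalIntegral.integral_of_le hneg0, ← hcn (fun u => u ^ 2 * K u)]
        have h2 : (∫ u in (0 : ℝ)..1, (-u) ^ 2 * K (-u)) = ∫ u in (0 : ℝ)..1, u ^ 2 * K u := by
          apply intervalIntegral.integral_congr
          intro u _
          show (-u) ^ 2 * K (-u) = u ^ 2 * K u
          rw [hKsym]; ring
        simpa using h2
      have hp0pos : 0 < ∫ u, φ u := by rw [hm0, hAval]; norm_num
      have hcore := core_ineq hb hg0 hφ0 hgφ hG0 hG1 hG2 hφInt hφ1 hφ2 hp0pos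
      rw [hm0, hm1, hm2] at hcore
      have h3 : b ^ 2 * (A * C - (-B) ^ 2) = b ^ 2 * (A * C - B ^ 2) := by ring
      linarith [h3 ▸ hcore]
    · -- x in the right half: use J = Ioc 0 1
      set φ : ℝ → ℝ := Set.indicator (Ioc (0 : ℝ) 1) K with hphidef
      have hφ0 : ∀ u, 0 ≤ φ u := fun u => Set.indicator_nonneg (fun v _ => hK0 v) u
      have hgφ : ∀ u, b * φ u ≤ g u := by
        intro u
        by_cases hu : u ∈ Ioc (0 : ℝ) 1
        · rw [hphidef, Set.indicator_of_mem hu]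
          have hmem : x - h * u ∈ Ioo s0 s1 := by
            constructor
            · have h1 : h * u ≤ h * 1 := mul_le_mul_of_nonneg_left hu.2 hh.le
              rw [mul_one] at h1
              linarith
            · have h2 : 0 < h * u := mul_pos hh hu.1
              linarith [hx.2]
          exact mul_le_mul_of_nonneg_right (hfb _ hmem) (hK0 u)
        · rw [hphidef, Set.indicator_of_notMem hu, mul_zero]
          exact hg0 u
      have hφInt : Integrable φ := hKInt.indicator measurableSet_Ioc
      have hind1 : (fun u => u * φ u)
          = Set.indicator (Ioc (0 : ℝ) 1) (fun u => u * K u) := by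
        funext u; rw [hphidef]
        by_cases hu : u ∈ Ioc (0 : ℝ) 1 <;>
          simp [Set.indicator_of_mem, Set.indicator_of_notMem, hu]
      have hind2 : (fun u => u ^ 2 * φ u)
          = Set.indicator (Ioc (0 : ℝ) 1) (fun u => u ^ 2 * K u) := by
        funext u; rw [hphidef]
        by_cases hu : u ∈ Ioc (0 : ℝ) 1 <;>
          simp [Set.indicator_of_mem, Set.indicator_of_notMem, hu]
      have hφ1 : Integrable (fun u => u * φ u) := by
        rw [hind1]; exact hK1.indicator measurableSet_Ioc
      have hφ2 : Integrable (fun u => u ^ 2 * φ u) := by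
        rw [hind2]; exact hK2.indicator measurableSet_Ioc
      have h01 : (0 : ℝ) ≤ 1 := by norm_num
      have hm0 : (∫ u, φ u) = A := by
        rw [hphidef, integral_indicator measurableSet_Ioc,
          ← intervalIntegral.integral_of_le h01]
      have hm1 : (∫ u, u * φ u) = B := by
        rw [hind1, integral_indicator measurableSet_Ioc,
          ← intervalIntegral.integral_of_le h01]
      have hm2 : (∫ u, u ^ 2 * φ u) = C := by
        rw [hind2, integral_indicator measurableSet_Ioc,
          ← intervalIntegral.integral_of_le h01]
      have hp0pos : 0 < ∫ u, φ u := by rw [hm0, hAval]; norm_num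
      have hcore := core_ineq hb hg0 hφ0 hgφ hG0 hG1 hG2 hφInt hφ1 hφ2 hp0pos
      rw [hm0, hm1, hm2] at hcore
      exact hcore
  rw [hkey, e1, e2]
  exact hmain
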